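/- Let K_0/Q_p be a finite unramified extension with Frobenius σ, and let W be a finite-dimensional K_0-vector space equipped with a bijective σ-semilinear map φ : W → W. Then the map f ↦ Tr_{K_0/Q_p} ∘ f induces an isomorphism from Hom_{K_0}(W, K_0)^{φ=1} (the K_0-linear functionals f satisfying f(φ(w)) = σ(f(w)) for all w) onto Hom_{Q_p}(W/(1−φ)W, Q_p). -/

import Mathlib

/-- The `ℚ_p`-linear map `f ↦ Tr ∘ f` from `K₀`-linear functionals to `ℚ_p`-linear
functionals. -/
noncomputable def traceCompAux (p : ℕ) [Fact p.Prime] (K₀ : Type*) [Field K₀]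
    [Algebra ℚ_[p] K₀] (W : Type*) [AddCommGroup W] [Module K₀ W]
    [Module ℚ_[p] W] [IsScalarTower ℚ_[p] K₀ W] :
    (W →ₗ[K₀] K₀) →ₗ[ℚ_[p]] (W →ₗ[ℚ_[p]] ℚ_[p]) where
  toFun f := (Algebra.trace ℚ_[p] K₀).comp (f.restrictScalars ℚ_[p])
  map_add' f g := by ext w; simp
  map_smul' a f := by ext w; simp

@[simp] lemma traceCompAux_apply (p : ℕ) [Fact p.Prime] (K₀ : Type*) [Field K₀]
    [Algebra ℚ_[p] K₀] (W : Type*) [AddCommGroup W] [Module K₀ W]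
    [Module ℚ_[p] W] [IsScalarTower ℚ_[p] K₀ W] (f : W →ₗ[K₀] K₀) (w : W) :
    traceCompAux p K₀ W f w = Algebra.trace ℚ_[p] K₀ (f w) := rfl

theorem stmt14 (p : ℕ) [Fact p.Prime] (K₀ : Type*) [Field K₀] [Algebra ℚ_[p] K₀]
    [FiniteDimensional ℚ_[p] K₀] [IsGalois ℚ_[p] K₀]
    (σ : K₀ ≃ₐ[ℚ_[p]] K₀) (hσ : orderOf σ = Module.finrank ℚ_[p] K₀)
    (W : Type*) [AddCommGroup W] [Module K₀ W] [FiniteDimensional K₀ W]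
    [Module ℚ_[p] W] [IsScalarTower ℚ_[p] K₀ W]
    (φ : W →+ W) (hbij : Function.Bijective φ)
    (hsemi : ∀ (c : K₀) (w : W), φ (c • w) = σ c • φ w) :
    Function.Injective
        (fun f : {f : W →ₗ[K₀] K₀ // ∀ w, f (φ w) = σ (f w)} =>
          (Algebra.trace ℚ_[p] K₀).comp (f.1.restrictScalars ℚ_[p])) ∧
      Set.range
          (fun f : {f : W →ₗ[K₀] K₀ // ∀ w, f (φ w) = σ (f w)} =>
            (Algebra.trace ℚ_[p] K₀).comp (f.1.restrictScalars ℚ_[p]))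
        = {g : W →ₗ[ℚ_[p]] ℚ_[p] | ∀ w : W, g (w - φ w) = 0} := by
  have hWfd : FiniteDimensional ℚ_[p] W := Module.Finite.trans K₀ W
  set T := traceCompAux p K₀ W with hT
  -- trace is invariant under automorphisms
  have htrσ : ∀ (τ : K₀ ≃ₐ[ℚ_[p]] K₀) (x : K₀),
      Algebra.trace ℚ_[p] K₀ (τ x) = Algebra.trace ℚ_[p] K₀ x := by
    intro τ x
    apply (algebraMap ℚ_[p] K₀).injective
    rw [trace_eq_sum_automorphisms, trace_eq_sum_automorphisms]
    exact Fintype.sum_equiv (Equiv.mulRight τ) _ _ (fun g => rfl)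
  -- injectivity of T on the whole hom space
  have hTinj : Function.Injective T := by
    rw [← LinearMap.ker_eq_bot, LinearMap.ker_eq_bot']
    intro f hf
    ext w
    simp only [LinearMap.zero_apply]
    refine (traceForm_nondegenerate ℚ_[p] K₀).1 (f w) fun c => ?_
    have h1 := DFunLike.congr_fun hf (c • w)
    simp only [hT, traceCompAux_apply, map_smul, smul_eq_mul, LinearMap.zero_apply] at h1
    simpa [Algebra.traceForm_apply, mul_comm] using h1
  -- equal finrank ⟹ surjectivity
  have hrank : Module.finrank ℚ_[p] (W →ₗ[K₀] K₀)
      = Module.finrank ℚ_[p] (W →ₗ[ℚ_[p]] ℚ_[p]) := by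
    rw [Module.finrank_linearMap_self ℚ_[p] ℚ_[p] W,
      ← Module.finrank_mul_finrank ℚ_[p] K₀ (W →ₗ[K₀] K₀),
      Module.finrank_linearMap_self K₀ K₀ W,
      Module.finrank_mul_finrank ℚ_[p] K₀ W]
  have hTsurj : Function.Surjective T :=
    (LinearMap.injective_iff_surjective_of_finrank_eq_finrank hrank).mp hTinj
  constructor
  · intro f g h
    exact Subtype.ext (hTinj h)
  · ext g
    constructor
    · rintro ⟨f, rfl⟩
      intro w
      have h1 : f.1 (w - φ w) = f.1 w - σ (f.1 w) := by
        rw [map_sub, f.2]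
      show Algebra.trace ℚ_[p] K₀ (f.1 (w - φ w)) = 0
      rw [h1, map_sub, htrσ σ (f.1 w), sub_self]
    · intro hg
      obtain ⟨f, hf⟩ := hTsurj g
      have hgφ : ∀ w, g (φ w) = g w := by
        intro w
        have := hg w
        rw [map_sub, sub_eq_zero] at this
        exact this.symm
      -- the twisted functional
      let f' : W →ₗ[K₀] K₀ :=
        { toFun := fun w => σ.symm (f (φ w))
          map_add' := fun x y => by simp [map_add]
          map_smul' := fun c w => by
            simp [hsemi, smul_eq_mul, map_mul] }
      have hTf' : T f' = g := by
        ext w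
        have h0 : T f' w = Algebra.trace ℚ_[p] K₀ (σ.symm (f (φ w))) := rfl
        rw [h0, htrσ σ.symm (f (φ w))]
        have h2 : Algebra.trace ℚ_[p] K₀ (f (φ w)) = g (φ w) := DFunLike.congr_fun hf (φ w)
        rw [h2, hgφ w]
      have hff' : f' = f := hTinj (hTf'.trans hf.symm)
      have hequiv : ∀ w, f (φ w) = σ (f w) := by
        intro w
        have : f' w = f w := by rw [hff']
        have h3 : σ.symm (f (φ w)) = f w := this
        rw [← h3, AlgEquiv.apply_symm_apply]
      exact ⟨⟨f, hequiv⟩, hf⟩
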